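/- For each digit d ∈ {0,1,2} and H ≥ 0, the difference Σ_{m' = 3^H}^{3^(H+1) − 1} (log₃(3m'+d+1) − log₃(3m'+d)) − 1/3 is O(3^{−H}); in particular there is a constant K such that the absolute value of this difference is at most K·3^{−H} for all H. -/

import Mathlib

lemma log_diff_le' {a : ℝ} (ha : 0 < a) :
    Real.log (a+1) - Real.log a ≤ 1/a := by
  have h1 : Real.log (a+1) - Real.log a = Real.log ((a+1)/a) :=
    (Real.log_div (by positivity) ha.ne').symm
  have h2 := Real.log_le_sub_one_of_pos (show (0:ℝ) < (a+1)/a by positivity)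
  rw [h1]
  have : (a+1)/a - 1 = 1/a := by field_simp; ring
  linarith [h2, this.le]

lemma le_log_diff' {a : ℝ} (ha : 0 < a) :
    1/(a+1) ≤ Real.log (a+1) - Real.log a := by
  have h2 : Real.log a - Real.log (a+1) = Real.log (a/(a+1)) :=
    (Real.log_div ha.ne' (by positivity)).symm
  have h3 := Real.log_le_sub_one_of_pos (show (0:ℝ) < a/(a+1) by positivity)
  rw [← h2] at h3
  have : a/(a+1) - 1 = -(1/(a+1)) := by field_simp; ring
  linarith

lemma keybound' (d : ℕ) (hd : d ≤ 2) {M : ℝ} (hM : 1 ≤ M) :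
    |(Real.log (3*M+d+1) - Real.log (3*M+d)) - (Real.log (M+1) - Real.log M)/3|
      ≤ 1/M^2 := by
  have hd' : (d:ℝ) ≤ 2 := by exact_mod_cast hd
  have hd0 : (0:ℝ) ≤ d := Nat.cast_nonneg d
  have hMpos : (0:ℝ) < M := by linarith
  have ha : (0:ℝ) < 3*M+d := by linarith
  have h1 : Real.log (3*M+d+1) - Real.log (3*M+d) ≤ 1/(3*M+d) := log_diff_le' ha
  have h2 : 1/(3*M+d+1) ≤ Real.log (3*M+d+1) - Real.log (3*M+d) := le_log_diff' ha
  have h3 : Real.log (M+1) - Real.log M ≤ 1/M := log_diff_le' hMpos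
  have h4 : 1/(M+1) ≤ Real.log (M+1) - Real.log M := le_log_diff' hMpos
  have e1 : 1/(3*M) - 1/(3*M+3) ≤ 1/M^2 := by
    rw [div_sub_div _ _ (by positivity : (3*M:ℝ) ≠ 0) (by positivity : (3*M+3:ℝ) ≠ 0),
      div_le_div_iff₀ (by positivity) (by positivity)]
    nlinarith [sq_nonneg M]
  have e2 : 1/M/3 = 1/(3*M) := by rw [div_div]; ring_nf
  have e3 : 1/(M+1)/3 = 1/(3*M+3) := by rw [div_div]; ring_nf
  rw [abs_le]
  constructor
  · have h7 : 1/(3*M+3) ≤ 1/(3*M+d+1) :=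
      one_div_le_one_div_of_le (by linarith) (by linarith)
    have h8 : (Real.log (M+1) - Real.log M)/3 ≤ 1/(3*M) := by
      rw [← e2]; linarith
    linarith
  · have h5 : 1/(3*M+d) ≤ 1/(3*M) :=
      one_div_le_one_div_of_le (by linarith) (by linarith)
    have h6 : 1/(3*M+3) ≤ (Real.log (M+1) - Real.log M)/3 := by
      rw [← e3]; linarith
    linarith

lemma telescope' (H : ℕ) :
    ∑ m' ∈ Finset.Ico ((3:ℕ) ^ H) (3 ^ (H + 1)),
      (Real.log ((m':ℝ)+1) - Real.log (m':ℝ)) = Real.log 3 := by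
  set g : ℕ → ℝ := fun j => Real.log (((3:ℕ)^H + j : ℕ) : ℝ) with hg
  rw [Finset.sum_Ico_eq_sum_range]
  have step2 : ∀ i ∈ Finset.range (3^(H+1) - 3^H),
      (Real.log (((((3:ℕ)^H + i : ℕ)):ℝ) + 1) - Real.log ((((3:ℕ)^H + i : ℕ)):ℝ))
      = g (i+1) - g i := by
    intro i _
    simp only [hg]
    push_cast
    ring_nf
  rw [Finset.sum_congr rfl step2, Finset.sum_range_sub g]
  simp only [hg]
  rw [show (3:ℕ)^H + (3^(H+1) - 3^H) = 3^(H+1) by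
    have := Nat.pow_le_pow_right (show 1 ≤ 3 by norm_num) (Nat.le_succ H); omega]
  rw [add_zero]
  push_cast
  rw [Real.log_pow, Real.log_pow]
  push_cast
  ring

/-- The sum `Σ_{m' = 3^H}^{3^(H+1)−1} (log₃(3m'+d+1) − log₃(3m'+d))` differs from `1/3`
by `O(3^{-H})`. -/
theorem sum_log_diff_is_third (d : ℕ) (hd : d ∈ ({0, 1, 2} : Finset ℕ)) :
    ∃ K : ℝ, 0 < K ∧ ∀ H : ℕ,
      |(∑ m' ∈ Finset.Ico ((3:ℕ) ^ H) (3 ^ (H + 1)),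
          (Real.log (3 * (m' : ℝ) + d + 1) / Real.log 3 -
            Real.log (3 * (m' : ℝ) + d) / Real.log 3)) - 1 / 3| ≤
        K * (3 : ℝ)⁻¹ ^ H := by
  have hd2 : d ≤ 2 := by
    simp only [Finset.mem_insert, Finset.mem_singleton] at hd; omega
  have hlog : (0:ℝ) < Real.log 3 := Real.log_pos (by norm_num)
  refine ⟨2 / Real.log 3, div_pos two_pos hlog, fun H => ?_⟩
  set A : ℕ → ℝ := fun m => Real.log (3 * (m:ℝ) + d + 1) - Real.log (3 * (m:ℝ) + d)
    with hA
  set C : ℕ → ℝ := fun m => (Real.log ((m:ℝ)+1) - Real.log (m:ℝ)) / 3 with hC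
  have hsum : (∑ m' ∈ Finset.Ico ((3:ℕ) ^ H) (3 ^ (H + 1)),
      (Real.log (3 * (m' : ℝ) + d + 1) / Real.log 3 -
        Real.log (3 * (m' : ℝ) + d) / Real.log 3))
      = (∑ m' ∈ Finset.Ico ((3:ℕ) ^ H) (3 ^ (H + 1)), A m') / Real.log 3 := by
    rw [Finset.sum_div]
    exact Finset.sum_congr rfl fun m _ => (sub_div _ _ _).symm
  rw [hsum]
  have hCsum : (∑ m' ∈ Finset.Ico ((3:ℕ) ^ H) (3 ^ (H + 1)), C m')
      = Real.log 3 / 3 := by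
    simp only [hC]
    rw [← Finset.sum_div, telescope' H]
  -- bound on the centered sum
  have hbound : |(∑ m' ∈ Finset.Ico ((3:ℕ) ^ H) (3 ^ (H + 1)), A m')
      - Real.log 3 / 3| ≤ 2 * (3:ℝ)⁻¹ ^ H := by
    rw [← hCsum, ← Finset.sum_sub_distrib]
    calc |∑ m' ∈ Finset.Ico ((3:ℕ) ^ H) (3 ^ (H + 1)), (A m' - C m')|
        ≤ ∑ m' ∈ Finset.Ico ((3:ℕ) ^ H) (3 ^ (H + 1)), |A m' - C m'| :=
          Finset.abs_sum_le_sum_abs _ _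
      _ ≤ ∑ m' ∈ Finset.Ico ((3:ℕ) ^ H) (3 ^ (H + 1)), (1 / ((3:ℝ)^H)^2) := by
          apply Finset.sum_le_sum
          intro m hm
          rw [Finset.mem_Ico] at hm
          have hm1 : (3:ℕ)^H ≤ m := hm.1
          have hmR : (3:ℝ)^H ≤ (m:ℝ) := by exact_mod_cast hm1
          have h3H : (1:ℝ) ≤ (3:ℝ)^H := by
            calc (1:ℝ) = 1^H := (one_pow H).symm
              _ ≤ 3^H := pow_le_pow_left₀ (by norm_num) (by norm_num) H
          have hM1 : (1:ℝ) ≤ (m:ℝ) := le_trans h3H hmR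
          refine le_trans (keybound' d hd2 hM1) ?_
          apply one_div_le_one_div_of_le (by positivity)
          have : (0:ℝ) ≤ (3:ℝ)^H := by positivity
          nlinarith
      _ = (2 * 3^H : ℕ) * (1 / ((3:ℝ)^H)^2) := by
          rw [Finset.sum_const, Nat.card_Ico, nsmul_eq_mul]
          congr 2
          have h : (3:ℕ)^(H+1) = 3 * 3^H := by ring
          omega
      _ = 2 * (3:ℝ)⁻¹ ^ H := by
          push_cast
          rw [inv_pow]
          have h3H : (0:ℝ) < (3:ℝ)^H := by positivity
          field_simp
  have key : (∑ m' ∈ Finset.Ico ((3:ℕ) ^ H) (3 ^ (H + 1)), A m') / Real.log 3 - 1/3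
      = ((∑ m' ∈ Finset.Ico ((3:ℕ) ^ H) (3 ^ (H + 1)), A m') - Real.log 3 / 3)
        / Real.log 3 := by
    rw [sub_div]
    congr 1
    rw [div_div, mul_comm, ← div_div, div_self hlog.ne']
  rw [key, abs_div, abs_of_pos hlog, div_le_iff₀ hlog]
  calc |(∑ m' ∈ Finset.Ico ((3:ℕ) ^ H) (3 ^ (H + 1)), A m') - Real.log 3 / 3|
      ≤ 2 * (3:ℝ)⁻¹ ^ H := hbound
    _ = 2 / Real.log 3 * (3:ℝ)⁻¹ ^ H * Real.log 3 := by
        rw [div_mul_eq_mul_div, div_mul_cancel₀ _ hlog.ne']
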